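/- arXiv:2308.13909 — 6 statements merged into one kernel-verified Lean document; each statement's English description precedes it below -/
import Mathlib

section
/- (Dilation equals retrodiction, classical case) Let φ(a'|a) = Σ_{b,b'} Φ(a',b'|a,b) β(b|a) be a dilation of the classical channel φ, let γ be a prior on A with Γ(a,b) = γ(a)β(b|a), and define \hat{Φ}_Γ by Bayes' rule on P(a,b,a',b') = Φ(a',b'|a,b)Γ(a,b). Then the channel obtained by appending the environment, reversing the dilated map with Bayes' rule, and marginalizing the environment equals the direct Bayesian reverse of φ with prior γ: Σ_{b,b'} \hat{Φ}_Γ(a,b|a',b') η(b'|a') = \hat{φ}_γ(a|a'), where η = Φ[Γ], assuming all required marginals are strictly positive. -/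
open Finset

/-- Dilation equals retrodiction, classical case. Let
`φ(a'|a) = Σ_{b,b'} Φ(a',b'|a,b) β(b|a)` be a dilation of the classical channel `φ`,
`Γ(a,b) = γ(a)β(b|a)` the total prior, `η = Φ[Γ]` the propagated joint output, and
`\hat{Φ}_Γ` the Bayesian reverse of the dilated map.  Then appending the environment
with the conditional `η(b'|a')`, applying `\hat{Φ}_Γ`, and marginalizing the
environment yields exactly the direct Bayesian reverse `\hat{φ}_γ(a|a')`. -/
theorem dilation_retrodiction_classical
    {A B : Type*} [Fintype A] [Fintype B]
    (Φ : (A × B) → (A × B) → ℝ)  -- Φ (a',b') (a,b) = Φ(a',b'|a,b)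
    (β : A → B → ℝ)              -- β a b = β(b|a)
    (γ : A → ℝ)
    (hΦ0 : ∀ x y, 0 ≤ Φ x y) (hΦ1 : ∀ y, ∑ x, Φ x y = 1)
    (hβ0 : ∀ a b, 0 ≤ β a b) (hβ1 : ∀ a, ∑ b, β a b = 1)
    (hγ0 : ∀ a, 0 ≤ γ a) (hγ1 : ∑ a, γ a = 1)
    -- the induced channel on the system:
    (φ : A → A → ℝ) (hφ : ∀ a' a, φ a' a = ∑ b, ∑ b', Φ (a', b') (a, b) * β a b)
    -- the total prior and the propagated joint output:
    (Γ : A × B → ℝ) (hΓ : ∀ a b, Γ (a, b) = γ a * β a b)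
    (η : A × B → ℝ) (hη : ∀ x, η x = ∑ y, Φ x y * Γ y)
    -- strict positivity of all required marginals:
    (hηpos : ∀ x, 0 < η x) :
    ∀ a a', (∑ b, ∑ b',
        -- Bayesian reverse of the dilated map: \hat{Φ}_Γ(a,b|a',b')
        (Φ (a', b') (a, b) * Γ (a, b) / η (a', b'))
        -- conditional distribution of the output environment: η(b'|a')
        * (η (a', b') / ∑ b'', η (a', b'')))
      = φ a' a * γ a / ∑ a2, φ a' a2 * γ a2 := by
  intro a a'
  set S := ∑ b'', η (a', b'') with hS
  have hnum : ∀ a0 : A, ∑ b, ∑ b', Φ (a', b') (a0, b) * Γ (a0, b)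
      = φ a' a0 * γ a0 := by
    intro a0
    rw [hφ, Finset.sum_mul]
    refine Finset.sum_congr rfl fun b _ => ?_
    rw [Finset.sum_mul]
    refine Finset.sum_congr rfl fun b' _ => ?_
    rw [hΓ]; ring
  have hden : S = ∑ a2, φ a' a2 * γ a2 := by
    rw [hS]
    calc ∑ b'', η (a', b'')
        = ∑ b'', ∑ a2, ∑ b, Φ (a', b'') (a2, b) * Γ (a2, b) := by
          refine Finset.sum_congr rfl fun b'' _ => ?_
          rw [hη]; rw [Fintype.sum_prod_type]
      _ = ∑ a2, ∑ b, ∑ b'', Φ (a', b'') (a2, b) * Γ (a2, b) := by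
          rw [Finset.sum_comm]
          exact Finset.sum_congr rfl fun a2 _ => Finset.sum_comm
      _ = ∑ a2, φ a' a2 * γ a2 := by
          refine Finset.sum_congr rfl fun a2 _ => ?_
          rw [← hnum a2]
  calc (∑ b, ∑ b', (Φ (a', b') (a, b) * Γ (a, b) / η (a', b'))
          * (η (a', b') / S))
      = ∑ b, ∑ b', Φ (a', b') (a, b) * Γ (a, b) / S := by
        refine Finset.sum_congr rfl fun b _ => Finset.sum_congr rfl fun b' _ => ?_
        have h := (hηpos (a', b')).ne'
        field_simp
    _ = (∑ b, ∑ b', Φ (a', b') (a, b) * Γ (a, b)) / S := by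
        rw [Finset.sum_div]
        exact Finset.sum_congr rfl fun b _ => (Finset.sum_div ..).symm
    _ = φ a' a * γ a / ∑ a2, φ a' a2 * γ a2 := by rw [hnum a, hden]
end

section
/- If U is a unitary with U(H_A⊗𝟙 + 𝟙⊗H_B)U† = H_A'⊗𝟙 + 𝟙⊗H_B' (generalized thermal), then for every real κ, U (τ_κ(H_A) ⊗ τ_κ(H_B)) U† = τ_κ(H_A') ⊗ τ_κ(H_B'), where τ_κ(H) = e^{κH}/Tr(e^{κH}). In particular (U, τ_κ(H_A), τ_κ(H_B)) is product-preserving. -/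
open Matrix Kronecker

/-- The Gibbs state `τ_κ(H) = e^{κH}/Tr(e^{κH})`. -/
noncomputable def gibbs {n : Type*} [Fintype n] [DecidableEq n]
    (κ : ℝ) (H : Matrix n n ℂ) : Matrix n n ℂ :=
  (Matrix.trace (NormedSpace.exp ((κ : ℂ) • H)))⁻¹ • NormedSpace.exp ((κ : ℂ) • H)

/-- `A ↦ A ⊗ₖ 1` as an algebra hom. -/
noncomputable def kroneckerOneAlgHom (n m : Type*) [Fintype n] [DecidableEq n]
    [Fintype m] [DecidableEq m] : Matrix n n ℂ →ₐ[ℂ] Matrix (n × m) (n × m) ℂ where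
  toFun X := X ⊗ₖ (1 : Matrix m m ℂ)
  map_one' := Matrix.one_kronecker_one
  map_mul' X Y := by rw [← Matrix.mul_kronecker_mul, Matrix.one_mul]
  map_zero' := Matrix.zero_kronecker _
  map_add' X Y := Matrix.add_kronecker X Y 1
  commutes' r := by
    simp [Algebra.algebraMap_eq_smul_one, Matrix.smul_kronecker, Matrix.one_kronecker_one]

/-- `B ↦ 1 ⊗ₖ B` as an algebra hom. -/
noncomputable def oneKroneckerAlgHom (n m : Type*) [Fintype n] [DecidableEq n]
    [Fintype m] [DecidableEq m] : Matrix m m ℂ →ₐ[ℂ] Matrix (n × m) (n × m) ℂ where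
  toFun X := (1 : Matrix n n ℂ) ⊗ₖ X
  map_one' := Matrix.one_kronecker_one
  map_mul' X Y := by rw [← Matrix.mul_kronecker_mul, Matrix.one_mul]
  map_zero' := Matrix.kronecker_zero _
  map_add' X Y := Matrix.kronecker_add 1 X Y
  commutes' r := by
    simp [Algebra.algebraMap_eq_smul_one, Matrix.kronecker_smul, Matrix.one_kronecker_one]

lemma exp_kronecker_one {n m : Type*} [Fintype n] [DecidableEq n]
    [Fintype m] [DecidableEq m] (A : Matrix n n ℂ) :
    NormedSpace.exp (A ⊗ₖ (1 : Matrix m m ℂ))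
      = NormedSpace.exp A ⊗ₖ (1 : Matrix m m ℂ) := by
  letI : NormedRing (Matrix n n ℂ) := Matrix.linftyOpNormedRing
  letI : NormedAlgebra ℂ (Matrix n n ℂ) := Matrix.linftyOpNormedAlgebra
  letI : NormedAlgebra ℚ (Matrix n n ℂ) := Matrix.linftyOpNormedAlgebra
  letI : NormedRing (Matrix (n × m) (n × m) ℂ) := Matrix.linftyOpNormedRing
  letI : NormedAlgebra ℂ (Matrix (n × m) (n × m) ℂ) := Matrix.linftyOpNormedAlgebra
  have hf : Continuous (kroneckerOneAlgHom n m) :=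
    LinearMap.continuous_of_finiteDimensional (kroneckerOneAlgHom n m).toLinearMap
  exact (NormedSpace.map_exp (kroneckerOneAlgHom n m) hf A).symm

lemma one_kronecker_exp {n m : Type*} [Fintype n] [DecidableEq n]
    [Fintype m] [DecidableEq m] (B : Matrix m m ℂ) :
    NormedSpace.exp ((1 : Matrix n n ℂ) ⊗ₖ B)
      = (1 : Matrix n n ℂ) ⊗ₖ NormedSpace.exp B := by
  letI : NormedRing (Matrix m m ℂ) := Matrix.linftyOpNormedRing
  letI : NormedAlgebra ℂ (Matrix m m ℂ) := Matrix.linftyOpNormedAlgebra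
  letI : NormedAlgebra ℚ (Matrix m m ℂ) := Matrix.linftyOpNormedAlgebra
  letI : NormedRing (Matrix (n × m) (n × m) ℂ) := Matrix.linftyOpNormedRing
  letI : NormedAlgebra ℂ (Matrix (n × m) (n × m) ℂ) := Matrix.linftyOpNormedAlgebra
  have hf : Continuous (oneKroneckerAlgHom n m) :=
    LinearMap.continuous_of_finiteDimensional (oneKroneckerAlgHom n m).toLinearMap
  exact (NormedSpace.map_exp (oneKroneckerAlgHom n m) hf B).symm

lemma exp_kronecker_sum {n m : Type*} [Fintype n] [DecidableEq n]
    [Fintype m] [DecidableEq m] (A : Matrix n n ℂ) (B : Matrix m m ℂ) :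
    NormedSpace.exp (A ⊗ₖ (1 : Matrix m m ℂ) + (1 : Matrix n n ℂ) ⊗ₖ B)
      = NormedSpace.exp A ⊗ₖ NormedSpace.exp B := by
  have hc : Commute (A ⊗ₖ (1 : Matrix m m ℂ)) ((1 : Matrix n n ℂ) ⊗ₖ B) := by
    unfold Commute SemiconjBy
    rw [← Matrix.mul_kronecker_mul, ← Matrix.mul_kronecker_mul, Matrix.one_mul,
      Matrix.mul_one, Matrix.one_mul, Matrix.mul_one]
  rw [Matrix.exp_add_of_commute _ _ hc, exp_kronecker_one, one_kronecker_exp,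
    ← Matrix.mul_kronecker_mul, Matrix.one_mul, Matrix.mul_one]

/-- If `U` is a generalized thermal unitary, i.e.
`U(H_A⊗𝟙 + 𝟙⊗H_B)U† = H_A'⊗𝟙 + 𝟙⊗H_B'`, then for every real `κ`,
`U (τ_κ(H_A) ⊗ τ_κ(H_B)) U† = τ_κ(H_A') ⊗ τ_κ(H_B')`; in particular
`(U, τ_κ(H_A), τ_κ(H_B))` is a product-preserving tuple. -/
theorem generalizedThermal_product_preserving
    {n m : Type*} [Fintype n] [DecidableEq n] [Nonempty n]
    [Fintype m] [DecidableEq m] [Nonempty m]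
    (U : Matrix (n × m) (n × m) ℂ) (hU : U ∈ Matrix.unitaryGroup (n × m) ℂ)
    (HA HA' : Matrix n n ℂ) (HB HB' : Matrix m m ℂ)
    (hHA : HA.IsHermitian) (hHB : HB.IsHermitian)
    (hHA' : HA'.IsHermitian) (hHB' : HB'.IsHermitian)
    (hGT : U * (HA ⊗ₖ (1 : Matrix m m ℂ) + (1 : Matrix n n ℂ) ⊗ₖ HB) * Uᴴ
      = HA' ⊗ₖ (1 : Matrix m m ℂ) + (1 : Matrix n n ℂ) ⊗ₖ HB') :
    ∀ κ : ℝ, U * (gibbs κ HA ⊗ₖ gibbs κ HB) * Uᴴ = gibbs κ HA' ⊗ₖ gibbs κ HB' := by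
  intro κ
  have hU' : star U * U = 1 := (Matrix.mem_unitaryGroup_iff'.mp hU)
  have hU'' : U * star U = 1 := (Matrix.mem_unitaryGroup_iff.mp hU)
  have hUinv : U⁻¹ = Uᴴ := by
    rw [← Matrix.star_eq_conjTranspose]
    exact Matrix.inv_eq_right_inv hU''
  have hUunit : IsUnit U := by
    apply Matrix.isUnit_iff_isUnit_det U |>.mpr
    exact Matrix.isUnit_det_of_right_inverse hU''
  -- conjugation of the exponential of the scaled sum
  have key : U * (NormedSpace.exp ((κ : ℂ) • HA) ⊗ₖ NormedSpace.exp ((κ : ℂ) • HB)) * Uᴴ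
      = NormedSpace.exp ((κ : ℂ) • HA') ⊗ₖ NormedSpace.exp ((κ : ℂ) • HB') := by
    rw [← exp_kronecker_sum, ← exp_kronecker_sum]
    have hsum : ∀ (X : Matrix n n ℂ) (Y : Matrix m m ℂ),
        ((κ : ℂ) • X) ⊗ₖ (1 : Matrix m m ℂ) + (1 : Matrix n n ℂ) ⊗ₖ ((κ : ℂ) • Y)
          = (κ : ℂ) • (X ⊗ₖ (1 : Matrix m m ℂ) + (1 : Matrix n n ℂ) ⊗ₖ Y) := by
      intro X Y
      rw [smul_add, Matrix.smul_kronecker, Matrix.kronecker_smul]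
    rw [hsum, hsum, ← hUinv, ← Matrix.exp_conj U _ hUunit]
    congr 1
    rw [hUinv, Matrix.mul_smul, Matrix.smul_mul, hGT]
  -- trace identity
  have htr : Matrix.trace (NormedSpace.exp ((κ : ℂ) • HA))
        * Matrix.trace (NormedSpace.exp ((κ : ℂ) • HB))
      = Matrix.trace (NormedSpace.exp ((κ : ℂ) • HA'))
        * Matrix.trace (NormedSpace.exp ((κ : ℂ) • HB')) := by
    rw [← Matrix.trace_kronecker, ← Matrix.trace_kronecker, ← key,
      Matrix.trace_mul_cycle, ← Matrix.star_eq_conjTranspose, hU', Matrix.one_mul]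
  unfold gibbs
  rw [Matrix.smul_kronecker, Matrix.kronecker_smul, Matrix.smul_kronecker,
    Matrix.kronecker_smul, smul_smul, smul_smul, Matrix.mul_smul, Matrix.smul_mul, key,
    ← mul_inv, ← mul_inv, htr]
end

section
/- (Generalized thermal iff product-preserving with full-rank states) A unitary U on a finite-dimensional bipartite Hilbert space satisfies U(α⊗β)U† = α'⊗β' for some full-rank density operators α, β, α', β' (with at least one of α, β not maximally mixed) if and only if there exist Hermitian operators H_A, H_B, H_A', H_B' (with H_A or H_B not proportional to the identity) such that U(H_A⊗𝟙 + 𝟙⊗H_B)U† = H_A'⊗𝟙 + 𝟙⊗H_B'. -/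
open Matrix Kronecker ComplexOrder

open NormedSpace

open scoped Matrix.Norms.L2Operator

section ThermalAux
variable {n m : Type*} [Fintype n] [DecidableEq n] [Fintype m] [DecidableEq m]

lemma kron_conjT (A : Matrix n n ℂ) (B : Matrix m m ℂ) : (A ⊗ₖ B)ᴴ = Aᴴ ⊗ₖ Bᴴ := by
  ext ⟨i,j⟩ ⟨k,l⟩
  simp [conjTranspose_apply, kroneckerMap_apply]

noncomputable def kronLinL : Matrix n n ℂ →ₗ[ℂ] Matrix (n × m) (n × m) ℂ where
  toFun x := x ⊗ₖ (1 : Matrix m m ℂ)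
  map_add' x y := Matrix.add_kronecker x y 1
  map_smul' r x := Matrix.smul_kronecker r x 1

noncomputable def kronL : Matrix n n ℂ →+* Matrix (n × m) (n × m) ℂ where
  toFun x := x ⊗ₖ (1 : Matrix m m ℂ)
  map_one' := Matrix.one_kronecker_one
  map_mul' x y := by rw [← Matrix.mul_kronecker_mul, one_mul]
  map_zero' := Matrix.zero_kronecker 1
  map_add' x y := Matrix.add_kronecker x y 1

noncomputable def kronR : Matrix m m ℂ →+* Matrix (n × m) (n × m) ℂ where
  toFun x := (1 : Matrix n n ℂ) ⊗ₖ x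
  map_one' := Matrix.one_kronecker_one
  map_mul' x y := by rw [← Matrix.mul_kronecker_mul, one_mul]
  map_zero' := Matrix.kronecker_zero 1
  map_add' x y := Matrix.kronecker_add 1 x y

lemma contL : Continuous (fun x : Matrix n n ℂ => x ⊗ₖ (1 : Matrix m m ℂ)) :=
  (kronLinL : Matrix n n ℂ →ₗ[ℂ] Matrix (n × m) (n × m) ℂ).continuous_of_finiteDimensional

lemma exp_kron_one (A : Matrix n n ℂ) :
    exp (A ⊗ₖ (1 : Matrix m m ℂ)) = exp A ⊗ₖ (1 : Matrix m m ℂ) :=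
  letI : NormedAlgebra ℚ (Matrix n n ℂ) := NormedAlgebra.restrictScalars ℚ ℂ (Matrix n n ℂ)
  (map_exp (kronL (n := n) (m := m)) contL A).symm

set_option linter.unusedSectionVars false

noncomputable def kronLinR : Matrix m m ℂ →ₗ[ℂ] Matrix (n × m) (n × m) ℂ where
  toFun x := (1 : Matrix n n ℂ) ⊗ₖ x
  map_add' x y := Matrix.kronecker_add 1 x y
  map_smul' r x := Matrix.kronecker_smul r 1 x

lemma exp_one_kron (B : Matrix m m ℂ) :
    exp ((1 : Matrix n n ℂ) ⊗ₖ B) = (1 : Matrix n n ℂ) ⊗ₖ exp B :=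
  letI : NormedAlgebra ℚ (Matrix m m ℂ) := NormedAlgebra.restrictScalars ℚ ℂ (Matrix m m ℂ)
  (map_exp (kronR (n := n) (m := m))
    (kronLinR : Matrix m m ℂ →ₗ[ℂ] _).continuous_of_finiteDimensional B).symm

lemma exp_sum_kron (A : Matrix n n ℂ) (B : Matrix m m ℂ) :
    exp (A ⊗ₖ (1 : Matrix m m ℂ) + (1 : Matrix n n ℂ) ⊗ₖ B)
      = exp A ⊗ₖ exp B := by
  rw [Matrix.exp_add_of_commute, exp_kron_one, exp_one_kron,
    ← Matrix.mul_kronecker_mul, one_mul, mul_one]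
  · unfold Commute SemiconjBy
    rw [← Matrix.mul_kronecker_mul, ← Matrix.mul_kronecker_mul]
    simp


set_option maxHeartbeats 2000000 in
lemma exp_posDef {H : Matrix n n ℂ} (hH : H.IsHermitian) : (exp H).PosDef := by
  set K := exp ((2⁻¹ : ℂ) • H) with hK
  have h2 : (2⁻¹:ℂ)•H + (2⁻¹:ℂ)•H = H := by rw [← add_smul]; norm_num
  have hKh : ((2⁻¹ : ℂ) • H).IsHermitian := by
    unfold Matrix.IsHermitian
    rw [Matrix.conjTranspose_smul, hH.eq]
    norm_num
  have hKherm : K.IsHermitian := Matrix.IsHermitian.exp hKh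
  have hsplit : exp H = K * K := by
    rw [← h2]; exact Matrix.exp_add_of_commute _ _ (Commute.refl _)
  have hKunit : IsUnit K := Matrix.isUnit_exp ((2⁻¹ : ℂ) • H)
  have hKinj : Function.Injective K.mulVec := Matrix.mulVec_injective_iff_isUnit.mpr hKunit
  rw [Matrix.posDef_iff_dotProduct_mulVec]
  constructor
  · exact Matrix.IsHermitian.exp hH
  · intro x hx
    have hy : K.mulVec x ≠ 0 := fun h => hx (hKinj (by simpa using h))
    have hvm : star x ᵥ* K = star (K *ᵥ x) := by rw [Matrix.star_mulVec, hKherm.eq]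
    rw [hsplit, ← Matrix.mulVec_mulVec, Matrix.dotProduct_mulVec, hvm]
    exact Matrix.dotProduct_star_self_pos_iff.mpr hy

lemma trace_real_pos {M : Matrix n n ℂ} [Nonempty n] (hM : M.PosDef) :
    ∃ r : ℝ, 0 < r ∧ M.trace = (r : ℂ) := by
  have hdiag : ∀ i, 0 < M i i := by
    intro i
    have hne : (Pi.single i (1:ℂ) : n → ℂ) ≠ 0 := by
      intro h
      have := congr_fun h i
      simp at this
    have h2 := hM.dotProduct_mulVec_pos hne
    have h3 : star (Pi.single i (1:ℂ)) ⬝ᵥ M *ᵥ Pi.single i (1:ℂ) = M i i := by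
      simp [dotProduct, Matrix.mulVec, Pi.single_apply]
    rwa [h3] at h2
  have htr : 0 < M.trace := Finset.sum_pos (fun i _ => hdiag i) Finset.univ_nonempty
  rw [Complex.lt_def] at htr
  exact ⟨M.trace.re, htr.1, by apply Complex.ext <;> simp [htr.2.symm]⟩

lemma smul_posDef {M : Matrix n n ℂ} (hM : M.PosDef) {r : ℝ} (hr : 0 < r) :
    ((r:ℂ) • M).PosDef := by
  rw [Matrix.posDef_iff_dotProduct_mulVec]
  constructor
  · unfold Matrix.IsHermitian
    rw [Matrix.conjTranspose_smul, hM.1.eq, Complex.star_def, Complex.conj_ofReal]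
  · intro x hx
    rw [Matrix.smul_mulVec, dotProduct_smul, smul_eq_mul]
    exact mul_pos (by exact_mod_cast hr) (hM.dotProduct_mulVec_pos hx)

lemma real_smul_one_eq_algebraMap (x : ℝ) :
    ((x:ℂ)) • (1 : Matrix n n ℂ) = algebraMap ℝ (Matrix n n ℂ) x := by
  rw [Algebra.algebraMap_eq_smul_one, ← Complex.coe_algebraMap, algebraMap_smul]

lemma exp_real_smul_one (x : ℝ) :
    exp ((x:ℂ) • (1 : Matrix n n ℂ)) = ((Real.exp x : ℝ):ℂ) • 1 := by
  rw [real_smul_one_eq_algebraMap, ← map_exp (algebraMap ℝ (Matrix n n ℂ))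
    (continuous_algebraMap _ _), show NormedSpace.exp x = Real.exp x from (congrFun Real.exp_eq_exp_ℝ x).symm,
    real_smul_one_eq_algebraMap]

lemma log_real_smul_one {r : ℝ} (hr : 0 < r) :
    CFC.log ((r:ℂ) • (1 : Matrix n n ℂ)) = ((Real.log r : ℝ):ℂ) • (1 : Matrix n n ℂ) := by
  rw [real_smul_one_eq_algebraMap, CFC.log_algebraMap, real_smul_one_eq_algebraMap]

lemma exp_log_of_posDef {A : Matrix n n ℂ} (hA : A.PosDef) : exp (CFC.log A) = A := by
  open scoped MatrixOrder in exact CFC.exp_log A hA.isStrictlyPositive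

example {A : Matrix n n ℂ} (h : A.IsHermitian) : IsSelfAdjoint A := h
example {A : Matrix n n ℂ} (h : IsSelfAdjoint A) : A.IsHermitian := h

lemma lemB {H : Matrix n n ℂ} [Nonempty n] (hH : H.IsHermitian) {t : ℂ}
    (h : exp H = t • 1) : ∃ c : ℂ, H = c • 1 := by
  have hpd : (t • (1:Matrix n n ℂ)).PosDef := h ▸ exp_posDef hH
  obtain ⟨r, hr, htr⟩ := trace_real_pos hpd
  have hcard : (0:ℝ) < Fintype.card n := by
    exact_mod_cast Fintype.card_pos
  have htr2 : (t • (1:Matrix n n ℂ)).trace = t * Fintype.card n := by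
    rw [Matrix.trace_smul, Matrix.trace_one, smul_eq_mul]
  have hcar : (Fintype.card n : ℂ) ≠ 0 := Nat.cast_ne_zero.mpr Fintype.card_ne_zero
  have ht : t = ((r / Fintype.card n : ℝ) : ℂ) := by
    rw [htr2] at htr
    push_cast
    exact (eq_div_iff hcar).mpr htr
  have hpos : 0 < r / Fintype.card n := div_pos hr hcard
  refine ⟨((Real.log (r / Fintype.card n) : ℝ) : ℂ), ?_⟩
  have := CFC.log_exp H (hH : IsSelfAdjoint H)
  rw [h, ht, log_real_smul_one hpos] at this
  exact this.symm

lemma lemA {α : Matrix n n ℂ} [Nonempty n] (hα : α.PosDef) (htr : α.trace = 1) {c : ℂ}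
    (hc : CFC.log α = c • 1) : α = ((Fintype.card n : ℂ))⁻¹ • 1 := by
  have hsa : IsSelfAdjoint (CFC.log α) := IsSelfAdjoint.log
  rw [hc] at hsa
  have hcr : c = ((c.re : ℝ) : ℂ) := by
    have h := congr_fun (congr_fun hsa (Classical.arbitrary n)) (Classical.arbitrary n)
    rw [Matrix.star_eq_conjTranspose] at h
    simp only [Matrix.conjTranspose_apply, Matrix.smul_apply, Matrix.one_apply_eq,
      smul_eq_mul, mul_one] at h
    exact (Complex.conj_eq_iff_re.mp h).symm
  have hα2 : α = exp ((c.re : ℂ) • (1 : Matrix n n ℂ)) := by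
    rw [← hcr, ← hc, exp_log_of_posDef hα]
  rw [exp_real_smul_one] at hα2
  have htr3 : ((Real.exp c.re : ℝ):ℂ) * Fintype.card n = 1 := by
    rw [hα2, Matrix.trace_smul, Matrix.trace_one, smul_eq_mul] at htr
    exact htr
  have : ((Real.exp c.re : ℝ):ℂ) = ((Fintype.card n : ℂ))⁻¹ := by
    field_simp at htr3 ⊢
    linear_combination htr3
  rw [hα2, this]

section conj
variable {p : Type*} [Fintype p] [DecidableEq p]

lemma exp_unitary_conj {U : Matrix p p ℂ} (hU : U ∈ Matrix.unitaryGroup p ℂ)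
    (A : Matrix p p ℂ) : exp (U * A * Uᴴ) = U * exp A * Uᴴ := by
  have h1 : U * star U = 1 := Matrix.mem_unitaryGroup_iff.mp hU
  have h2 : star U * U = 1 := Matrix.mem_unitaryGroup_iff'.mp hU
  have hUnit : IsUnit U := ⟨⟨U, star U, h1, h2⟩, rfl⟩
  have hinv : U⁻¹ = Uᴴ := Matrix.inv_eq_left_inv (by rw [← Matrix.star_eq_conjTranspose]; exact h2)
  rw [← hinv]
  exact Matrix.exp_conj U A hUnit

lemma conj_hermitian {U : Matrix p p ℂ} {S : Matrix p p ℂ} (hS : S.IsHermitian) :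
    (U * S * Uᴴ).IsHermitian := by
  unfold Matrix.IsHermitian
  rw [Matrix.conjTranspose_mul, Matrix.conjTranspose_mul, Matrix.conjTranspose_conjTranspose,
    hS.eq, Matrix.mul_assoc]

lemma trace_conj {U : Matrix p p ℂ} (hU : U ∈ Matrix.unitaryGroup p ℂ)
    (A : Matrix p p ℂ) : (U * A * Uᴴ).trace = A.trace := by
  have h2 : star U * U = 1 := Matrix.mem_unitaryGroup_iff'.mp hU
  rw [Matrix.trace_mul_cycle, ← Matrix.star_eq_conjTranspose, h2, one_mul]

end conj

lemma kron_sum_hermitian {A : Matrix n n ℂ} {B : Matrix m m ℂ}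
    (hA : A.IsHermitian) (hB : B.IsHermitian) :
    (A ⊗ₖ (1 : Matrix m m ℂ) + (1 : Matrix n n ℂ) ⊗ₖ B).IsHermitian := by
  apply Matrix.IsHermitian.add
  · unfold Matrix.IsHermitian
    rw [kron_conjT, Matrix.conjTranspose_one, hA.eq]
  · unfold Matrix.IsHermitian
    rw [kron_conjT, Matrix.conjTranspose_one, hB.eq]

end ThermalAux

/-- Generalized thermal iff product-preserving with full-rank states.
A unitary `U` on a bipartite space preserves some full-rank product of density
operators (with at least one factor not maximally mixed) if and only if it maps
some non-interacting Hamiltonian sum (with at least one local Hamiltonian not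
proportional to the identity) to a non-interacting Hamiltonian sum. -/
theorem generalizedThermal_iff_productPreserving_fullRank
    {n m : Type*} [Fintype n] [DecidableEq n] [Nonempty n]
    [Fintype m] [DecidableEq m] [Nonempty m]
    (U : Matrix (n × m) (n × m) ℂ) (hU : U ∈ Matrix.unitaryGroup (n × m) ℂ) :
    (∃ (α α' : Matrix n n ℂ) (β β' : Matrix m m ℂ),
        α.PosDef ∧ β.PosDef ∧ α'.PosDef ∧ β'.PosDef ∧
        α.trace = 1 ∧ β.trace = 1 ∧ α'.trace = 1 ∧ β'.trace = 1 ∧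
        (α ≠ ((Fintype.card n : ℂ))⁻¹ • (1 : Matrix n n ℂ) ∨
          β ≠ ((Fintype.card m : ℂ))⁻¹ • (1 : Matrix m m ℂ)) ∧
        U * (α ⊗ₖ β) * Uᴴ = α' ⊗ₖ β')
    ↔ (∃ (HA HA' : Matrix n n ℂ) (HB HB' : Matrix m m ℂ),
        HA.IsHermitian ∧ HB.IsHermitian ∧ HA'.IsHermitian ∧ HB'.IsHermitian ∧
        ((¬ ∃ c : ℂ, HA = c • (1 : Matrix n n ℂ)) ∨
          (¬ ∃ c : ℂ, HB = c • (1 : Matrix m m ℂ))) ∧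
        U * (HA ⊗ₖ (1 : Matrix m m ℂ) + (1 : Matrix n n ℂ) ⊗ₖ HB) * Uᴴ
          = HA' ⊗ₖ (1 : Matrix m m ℂ) + (1 : Matrix n n ℂ) ⊗ₖ HB') := by
  constructor
  · rintro ⟨α, α', β, β', hα, hβ, hα', hβ', htα, htβ, htα', htβ', hne, heq⟩
    refine ⟨CFC.log α, CFC.log α', CFC.log β, CFC.log β',
      IsSelfAdjoint.log, IsSelfAdjoint.log, IsSelfAdjoint.log, IsSelfAdjoint.log, ?_, ?_⟩
    · rcases hne with h | h
      · left; rintro ⟨c, hc⟩; exact h (lemA hα htα hc)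
      · right; rintro ⟨c, hc⟩; exact h (lemA hβ htβ hc)
    · have hexpS : exp (CFC.log α ⊗ₖ (1 : Matrix m m ℂ) + (1 : Matrix n n ℂ) ⊗ₖ CFC.log β)
          = α ⊗ₖ β := by
        rw [exp_sum_kron, exp_log_of_posDef hα, exp_log_of_posDef hβ]
      have hexpS' : exp (CFC.log α' ⊗ₖ (1 : Matrix m m ℂ) + (1 : Matrix n n ℂ) ⊗ₖ CFC.log β')
          = α' ⊗ₖ β' := by
        rw [exp_sum_kron, exp_log_of_posDef hα', exp_log_of_posDef hβ']
      have hsaS : IsSelfAdjoint (CFC.log α ⊗ₖ (1 : Matrix m m ℂ)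
          + (1 : Matrix n n ℂ) ⊗ₖ CFC.log β) :=
        kron_sum_hermitian IsSelfAdjoint.log IsSelfAdjoint.log
      have hsaS' : IsSelfAdjoint (CFC.log α' ⊗ₖ (1 : Matrix m m ℂ)
          + (1 : Matrix n n ℂ) ⊗ₖ CFC.log β') :=
        kron_sum_hermitian IsSelfAdjoint.log IsSelfAdjoint.log
      have hsaC : IsSelfAdjoint (U * (CFC.log α ⊗ₖ (1 : Matrix m m ℂ)
          + (1 : Matrix n n ℂ) ⊗ₖ CFC.log β) * Uᴴ) := conj_hermitian hsaS
      have h1 : exp (U * (CFC.log α ⊗ₖ (1 : Matrix m m ℂ)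
            + (1 : Matrix n n ℂ) ⊗ₖ CFC.log β) * Uᴴ)
          = exp (CFC.log α' ⊗ₖ (1 : Matrix m m ℂ) + (1 : Matrix n n ℂ) ⊗ₖ CFC.log β') := by
        rw [exp_unitary_conj hU, hexpS, heq, hexpS']
      calc U * (CFC.log α ⊗ₖ (1 : Matrix m m ℂ) + (1 : Matrix n n ℂ) ⊗ₖ CFC.log β) * Uᴴ
          = CFC.log (exp (U * (CFC.log α ⊗ₖ (1 : Matrix m m ℂ)
              + (1 : Matrix n n ℂ) ⊗ₖ CFC.log β) * Uᴴ)) := (CFC.log_exp _ hsaC).symm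
        _ = CFC.log (exp (CFC.log α' ⊗ₖ (1 : Matrix m m ℂ)
              + (1 : Matrix n n ℂ) ⊗ₖ CFC.log β')) := by rw [h1]
        _ = _ := CFC.log_exp _ hsaS'
  · rintro ⟨HA, HA', HB, HB', hHA, hHB, hHA', hHB', hcond, heq⟩
    obtain ⟨a, ha, hta⟩ := trace_real_pos (exp_posDef hHA)
    obtain ⟨b, hb, htb⟩ := trace_real_pos (exp_posDef hHB)
    obtain ⟨a', ha', hta'⟩ := trace_real_pos (exp_posDef hHA')
    obtain ⟨b', hb', htb'⟩ := trace_real_pos (exp_posDef hHB')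
    have key : U * (exp HA ⊗ₖ exp HB) * Uᴴ = exp HA' ⊗ₖ exp HB' := by
      rw [← exp_sum_kron, ← exp_sum_kron, ← exp_unitary_conj hU, heq]
    have hab : ((a:ℂ)) * (b:ℂ) = ((a':ℂ)) * (b':ℂ) := by
      have h2 := congr_arg Matrix.trace key
      rwa [trace_conj hU, Matrix.trace_kronecker, Matrix.trace_kronecker,
        hta, htb, hta', htb'] at h2
    refine ⟨((a⁻¹:ℝ):ℂ) • exp HA, ((a'⁻¹:ℝ):ℂ) • exp HA',
      ((b⁻¹:ℝ):ℂ) • exp HB, ((b'⁻¹:ℝ):ℂ) • exp HB',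
      smul_posDef (exp_posDef hHA) (inv_pos.mpr ha),
      smul_posDef (exp_posDef hHB) (inv_pos.mpr hb),
      smul_posDef (exp_posDef hHA') (inv_pos.mpr ha'),
      smul_posDef (exp_posDef hHB') (inv_pos.mpr hb'),
      ?_, ?_, ?_, ?_, ?_, ?_⟩
    · rw [Matrix.trace_smul, hta, smul_eq_mul]; push_cast
      exact inv_mul_cancel₀ (by exact_mod_cast ha.ne')
    · rw [Matrix.trace_smul, htb, smul_eq_mul]; push_cast
      exact inv_mul_cancel₀ (by exact_mod_cast hb.ne')
    · rw [Matrix.trace_smul, hta', smul_eq_mul]; push_cast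
      exact inv_mul_cancel₀ (by exact_mod_cast ha'.ne')
    · rw [Matrix.trace_smul, htb', smul_eq_mul]; push_cast
      exact inv_mul_cancel₀ (by exact_mod_cast hb'.ne')
    · rcases hcond with h | h
      · left
        intro hcontra
        apply h
        have h2 := congr_arg (fun M => ((a:ℝ):ℂ) • M) hcontra
        simp only [smul_smul] at h2
        rw [show ((a:ℝ):ℂ) * ((a⁻¹:ℝ):ℂ) = 1 by
            push_cast; exact mul_inv_cancel₀ (by exact_mod_cast ha.ne'), one_smul] at h2
        exact lemB hHA h2
      · right
        intro hcontra
        apply h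
        have h2 := congr_arg (fun M => ((b:ℝ):ℂ) • M) hcontra
        simp only [smul_smul] at h2
        rw [show ((b:ℝ):ℂ) * ((b⁻¹:ℝ):ℂ) = 1 by
            push_cast; exact mul_inv_cancel₀ (by exact_mod_cast hb.ne'), one_smul] at h2
        exact lemB hHB h2
    · rw [Matrix.smul_kronecker, Matrix.kronecker_smul, smul_smul,
        Matrix.smul_kronecker, Matrix.kronecker_smul, smul_smul,
        Matrix.mul_smul, Matrix.smul_mul, key]
      congr 1
      push_cast
      rw [← mul_inv, ← mul_inv, hab]
end

section
/- (Product-preservation implies tabletop reversibility) Let U be a unitary on H_A ⊗ H_B, α a full-rank density operator on H_A and β a density operator on H_B such that U(α⊗β)U† = α'⊗β' with α' full rank. Define the channel E[ρ] = Tr_B[U(ρ⊗β)U†]. Then the Petz recovery map of E with reference α equals ρ ↦ Tr_B[U†(ρ⊗β')U]. -/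
open Matrix Kronecker ComplexOrder

/-- The partial trace over the second (environment) factor. -/
noncomputable def trB {n m : Type*} [Fintype n] [Fintype m]
    (M : Matrix (n × m) (n × m) ℂ) : Matrix n n ℂ :=
  Matrix.of fun i j => ∑ b, M (i, b) (j, b)

/-- The square root of a positive semidefinite matrix, as `Matrix.PosSemidef.sqrt` was defined
in Mathlib (Dec 2024); it has since been removed from Mathlib. -/
noncomputable def Matrix.PosSemidef.sqrt {n 𝕜 : Type*} [Fintype n] [RCLike 𝕜] [DecidableEq n]
    {A : Matrix n n 𝕜} (hA : A.PosSemidef) : Matrix n n 𝕜 :=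
  hA.1.eigenvectorUnitary.1 * diagonal ((↑) ∘ (√·) ∘ hA.1.eigenvalues) *
  (star hA.1.eigenvectorUnitary : Matrix n n 𝕜)

section sqrtPort

open scoped MatrixOrder

lemma Matrix.PosSemidef.sqrt_eq_cfcSqrt {n : Type*} [Fintype n] [DecidableEq n]
    {A : Matrix n n ℂ} (hA : A.PosSemidef) : hA.sqrt = CFC.sqrt A := by
  rw [CFC.sqrt_eq_real_sqrt A hA.nonneg, cfcₙ_eq_cfc (hf0 := Real.sqrt_zero), hA.1.cfc_eq, IsHermitian.cfc, Unitary.conjStarAlgAut_apply]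
  rfl

lemma Matrix.PosSemidef.posSemidef_sqrt {n : Type*} [Fintype n] [DecidableEq n]
    {A : Matrix n n ℂ} (hA : A.PosSemidef) : hA.sqrt.PosSemidef := by
  rw [hA.sqrt_eq_cfcSqrt]
  exact (CFC.sqrt_nonneg A).posSemidef

lemma Matrix.PosSemidef.sqrt_mul_self {n : Type*} [Fintype n] [DecidableEq n]
    {A : Matrix n n ℂ} (hA : A.PosSemidef) : hA.sqrt * hA.sqrt = A := by
  rw [hA.sqrt_eq_cfcSqrt]
  exact CFC.sqrt_mul_sqrt_self A hA.nonneg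

lemma Matrix.PosSemidef.eq_sqrt_of_sq_eq {n : Type*} [Fintype n] [DecidableEq n]
    {A : Matrix n n ℂ} (hA : A.PosSemidef) {B : Matrix n n ℂ} (hB : B.PosSemidef)
    (hAB : A ^ 2 = B) : A = hB.sqrt := by
  rw [hB.sqrt_eq_cfcSqrt]
  exact (CFC.sqrt_unique (by rw [← sq]; exact hAB) hA.nonneg).symm

end sqrtPort

lemma kron_conjTranspose {n m : Type*} [Fintype n] [Fintype m]
    (A : Matrix n n ℂ) (B : Matrix m m ℂ) : (A ⊗ₖ B)ᴴ = Aᴴ ⊗ₖ Bᴴ := by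
  ext ⟨i, j⟩ ⟨k, l⟩
  simp [conjTranspose_apply, kroneckerMap_apply, mul_comm]

lemma posSemidef_kron {n m : Type*} [Fintype n] [Fintype m] [DecidableEq n] [DecidableEq m]
    {A : Matrix n n ℂ} {B : Matrix m m ℂ} (hA : A.PosSemidef) (hB : B.PosSemidef) :
    (A ⊗ₖ B).PosSemidef := by
  exact hA.kronecker hB

lemma trB_conj {n m : Type*} [Fintype n] [Fintype m] [DecidableEq n] [DecidableEq m]
    (A B : Matrix n n ℂ) (M : Matrix (n × m) (n × m) ℂ) :
    trB ((A ⊗ₖ (1 : Matrix m m ℂ)) * M * (B ⊗ₖ (1 : Matrix m m ℂ))) = A * trB M * B := by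
  ext i j
  simp only [trB, Matrix.of_apply, Matrix.mul_apply, kroneckerMap_apply, one_apply,
    Fintype.sum_prod_type]
  simp only [mul_ite, mul_zero, mul_one, ite_mul, zero_mul,
    Finset.sum_ite_eq, Finset.sum_ite_eq', Finset.mem_univ, if_true,
    Finset.mul_sum, Finset.sum_mul]
  rw [Finset.sum_comm]
  exact Finset.sum_congr rfl fun b _ => Finset.sum_comm ..

/-- Product-preservation implies tabletop reversibility: if `U(α⊗β)U† = α'⊗β'`
with `α, α'` full-rank density operators, then the Petz recovery map of the
channel `E[ρ] = Tr_B[U(ρ⊗β)U†]` with reference `α` (note `E[α] = α'`) equals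
`ρ ↦ Tr_B[U†(ρ⊗β')U]`. -/
theorem productPreserving_tabletopReversible
    {n m : Type*} [Fintype n] [DecidableEq n] [Fintype m] [DecidableEq m]
    (U : Matrix (n × m) (n × m) ℂ) (hU : U ∈ Matrix.unitaryGroup (n × m) ℂ)
    (α α' : Matrix n n ℂ) (β β' : Matrix m m ℂ)
    (hα : α.PosDef) (hα' : α'.PosDef) (hβ : β.PosSemidef) (hβ' : β'.PosSemidef)
    (hαt : α.trace = 1) (hβt : β.trace = 1) (hα't : α'.trace = 1) (hβ't : β'.trace = 1)
    (hprod : U * (α ⊗ₖ β) * Uᴴ = α' ⊗ₖ β') :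
    ∀ ρ : Matrix n n ℂ,
      -- the Petz recovery map √α E†[(α')^{-1/2} ρ (α')^{-1/2}] √α
      hα.posSemidef.sqrt *
        trB (((1 : Matrix n n ℂ) ⊗ₖ hβ.sqrt) * Uᴴ *
            (((hα'.posSemidef.sqrt)⁻¹ * ρ * (hα'.posSemidef.sqrt)⁻¹) ⊗ₖ (1 : Matrix m m ℂ)) *
            U * ((1 : Matrix n n ℂ) ⊗ₖ hβ.sqrt)) *
        hα.posSemidef.sqrt
      = trB (Uᴴ * (ρ ⊗ₖ β') * U) := by
  intro ρ
  set sα := hα.posSemidef.sqrt with hsα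
  set sα' := hα'.posSemidef.sqrt with hsα'
  set sβ := hβ.sqrt with hsβ
  set sβ' := hβ'.sqrt with hsβ'
  have hUU : Uᴴ * U = 1 := by
    simpa [star_eq_conjTranspose] using hU.1
  have hUU' : U * Uᴴ = 1 := by
    simpa [star_eq_conjTranspose] using hU.2
  have hS : (sα ⊗ₖ sβ).PosSemidef := posSemidef_kron hα.posSemidef.posSemidef_sqrt hβ.posSemidef_sqrt
  have hS' : (sα' ⊗ₖ sβ').PosSemidef :=
    posSemidef_kron hα'.posSemidef.posSemidef_sqrt hβ'.posSemidef_sqrt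
  have hP' : (α' ⊗ₖ β').PosSemidef := posSemidef_kron hα'.posSemidef hβ'
  have hSS : (sα ⊗ₖ sβ) * (sα ⊗ₖ sβ) = α ⊗ₖ β := by
    rw [← Matrix.mul_kronecker_mul, Matrix.PosSemidef.sqrt_mul_self, Matrix.PosSemidef.sqrt_mul_self]
  have hSS' : (sα' ⊗ₖ sβ') * (sα' ⊗ₖ sβ') = α' ⊗ₖ β' := by
    rw [← Matrix.mul_kronecker_mul, Matrix.PosSemidef.sqrt_mul_self, Matrix.PosSemidef.sqrt_mul_self]
  have h1 : U * (sα ⊗ₖ sβ) * Uᴴ = hP'.sqrt := by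
    refine Matrix.PosSemidef.eq_sqrt_of_sq_eq (hS.mul_mul_conjTranspose_same U) hP' ?_
    rw [pow_two]
    calc U * (sα ⊗ₖ sβ) * Uᴴ * (U * (sα ⊗ₖ sβ) * Uᴴ)
        = U * ((sα ⊗ₖ sβ) * (Uᴴ * U) * (sα ⊗ₖ sβ)) * Uᴴ := by simp only [mul_assoc]
      _ = U * (α ⊗ₖ β) * Uᴴ := by rw [hUU, mul_one, hSS]
      _ = α' ⊗ₖ β' := hprod
  have h2 : sα' ⊗ₖ sβ' = hP'.sqrt := by
    refine Matrix.PosSemidef.eq_sqrt_of_sq_eq hS' hP' ?_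
    rw [pow_two, hSS']
  have key : U * (sα ⊗ₖ sβ) = (sα' ⊗ₖ sβ') * U := by
    have := h1.trans h2.symm
    calc U * (sα ⊗ₖ sβ) = U * (sα ⊗ₖ sβ) * (Uᴴ * U) := by rw [hUU, mul_one]
      _ = (U * (sα ⊗ₖ sβ) * Uᴴ) * U := by simp only [mul_assoc]
      _ = (sα' ⊗ₖ sβ') * U := by rw [this]
  have keyT : (sα ⊗ₖ sβ) * Uᴴ = Uᴴ * (sα' ⊗ₖ sβ') := by
    have := congrArg Matrix.conjTranspose key
    have e1 : sαᴴ = sα := hα.posSemidef.posSemidef_sqrt.1.eq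
    have e2 : sβᴴ = sβ := hβ.posSemidef_sqrt.1.eq
    have e3 : sα'ᴴ = sα' := hα'.posSemidef.posSemidef_sqrt.1.eq
    have e4 : sβ'ᴴ = sβ' := hβ'.posSemidef_sqrt.1.eq
    rw [Matrix.conjTranspose_mul, Matrix.conjTranspose_mul, kron_conjTranspose, kron_conjTranspose,
      e1, e2, e3, e4] at this
    exact this
  -- invertibility of sα'
  have hdet : IsUnit sα'.det := by
    have h : IsUnit (sα'.det * sα'.det) := by
      rw [← Matrix.det_mul, Matrix.PosSemidef.sqrt_mul_self]
      exact (Matrix.isUnit_iff_isUnit_det α').mp hα'.isUnit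
    exact isUnit_of_mul_isUnit_left h
  have hinv1 : sα' * sα'⁻¹ = 1 := Matrix.mul_nonsing_inv _ hdet
  have hinv2 : sα'⁻¹ * sα' = 1 := Matrix.nonsing_inv_mul _ hdet
  have hmix1 : (sα ⊗ₖ (1 : Matrix m m ℂ)) * ((1 : Matrix n n ℂ) ⊗ₖ sβ) = sα ⊗ₖ sβ := by
    rw [← Matrix.mul_kronecker_mul, mul_one, one_mul]
  have hmix2 : ((1 : Matrix n n ℂ) ⊗ₖ sβ) * (sα ⊗ₖ (1 : Matrix m m ℂ)) = sα ⊗ₖ sβ := by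
    rw [← Matrix.mul_kronecker_mul, mul_one, one_mul]
  have hmid : (sα' ⊗ₖ sβ') * ((sα'⁻¹ * ρ * sα'⁻¹) ⊗ₖ (1 : Matrix m m ℂ)) * (sα' ⊗ₖ sβ')
      = ρ ⊗ₖ β' := by
    have e1 : sα' * (sα'⁻¹ * ρ * sα'⁻¹) * sα' = ρ := by
      calc sα' * (sα'⁻¹ * ρ * sα'⁻¹) * sα'
          = (sα' * sα'⁻¹) * ρ * (sα'⁻¹ * sα') := by simp only [mul_assoc]
        _ = ρ := by rw [hinv1, hinv2, one_mul, mul_one]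
    have e2 : sβ' * sβ' = β' := Matrix.PosSemidef.sqrt_mul_self hβ'
    rw [← Matrix.mul_kronecker_mul, ← Matrix.mul_kronecker_mul, mul_one, e1, e2]
  rw [← trB_conj]
  refine congrArg trB ?_
  calc (sα ⊗ₖ (1 : Matrix m m ℂ)) *
        (((1 : Matrix n n ℂ) ⊗ₖ sβ) * Uᴴ *
          ((sα'⁻¹ * ρ * sα'⁻¹) ⊗ₖ (1 : Matrix m m ℂ)) * U * ((1 : Matrix n n ℂ) ⊗ₖ sβ)) *
        (sα ⊗ₖ (1 : Matrix m m ℂ))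
      = ((sα ⊗ₖ (1 : Matrix m m ℂ)) * ((1 : Matrix n n ℂ) ⊗ₖ sβ)) *
          (Uᴴ * ((sα'⁻¹ * ρ * sα'⁻¹) ⊗ₖ (1 : Matrix m m ℂ)) * U) *
          (((1 : Matrix n n ℂ) ⊗ₖ sβ) * (sα ⊗ₖ (1 : Matrix m m ℂ))) := by
        simp only [mul_assoc]
    _ = (sα ⊗ₖ sβ) * (Uᴴ * ((sα'⁻¹ * ρ * sα'⁻¹) ⊗ₖ (1 : Matrix m m ℂ)) * U) * (sα ⊗ₖ sβ) := by
        rw [hmix1, hmix2]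
    _ = ((sα ⊗ₖ sβ) * Uᴴ) * ((sα'⁻¹ * ρ * sα'⁻¹) ⊗ₖ (1 : Matrix m m ℂ)) * (U * (sα ⊗ₖ sβ)) := by
        simp only [mul_assoc]
    _ = (Uᴴ * (sα' ⊗ₖ sβ')) * ((sα'⁻¹ * ρ * sα'⁻¹) ⊗ₖ (1 : Matrix m m ℂ)) *
          ((sα' ⊗ₖ sβ') * U) := by rw [keyT, key]
    _ = Uᴴ * ((sα' ⊗ₖ sβ') * ((sα'⁻¹ * ρ * sα'⁻¹) ⊗ₖ (1 : Matrix m m ℂ)) * (sα' ⊗ₖ sβ')) * U := by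
        simp only [mul_assoc]
    _ = Uᴴ * (ρ ⊗ₖ β') * U := by rw [hmid]
end

section
/- (Every two-qubit unitary preserves some pure product state) For every unitary U on ℂ²⊗ℂ² and every unit vector |β⟩ ∈ ℂ², there exists a unit vector |α⟩ ∈ ℂ² and unit vectors |α'⟩, |β'⟩ such that U(|α⟩⊗|β⟩) = |α'⟩⊗|β'⟩ (up to global phase). -/
open Matrix

/-- The Kronecker (tensor) product of two vectors on `Fin 2`. -/
def vecKron (a b : Fin 2 → ℂ) : Fin 2 × Fin 2 → ℂ := fun p => a p.1 * b p.2

/-- A unit vector in `ℂ²`. -/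
def IsUnitVec (v : Fin 2 → ℂ) : Prop := ∑ i, Complex.normSq (v i) = 1

lemma quad_root (A B C : ℂ) :
    ∃ p q : ℂ, ¬(p = 0 ∧ q = 0) ∧ A * p ^ 2 + B * (p * q) + C * q ^ 2 = 0 := by
  by_cases hA : A = 0
  · exact ⟨1, 0, by simp, by simp [hA]⟩
  · have hdeg : 0 < (Polynomial.C A * Polynomial.X ^ 2 +
        Polynomial.C B * Polynomial.X + Polynomial.C C).degree := by
      rw [Polynomial.degree_quadratic hA]; norm_num
    obtain ⟨z, hz⟩ := Complex.exists_root hdeg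
    refine ⟨z, 1, by simp, ?_⟩
    have : A * z ^ 2 + B * z + C = 0 := by
      simpa [Polynomial.IsRoot, Polynomial.eval_add, Polynomial.eval_mul] using hz
    linear_combination this

lemma kron_normSq (a b : Fin 2 → ℂ) :
    ∑ i, Complex.normSq (vecKron a b i) =
      (∑ i, Complex.normSq (a i)) * (∑ i, Complex.normSq (b i)) := by
  simp [vecKron, Fintype.sum_prod_type, Complex.normSq_mul, Fin.sum_univ_two]
  ring

lemma prod_decomp (v : Fin 2 × Fin 2 → ℂ)
    (hdet : v (0,0) * v (1,1) = v (0,1) * v (1,0)) :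
    ∃ a b : Fin 2 → ℂ, vecKron a b = v := by
  have hdet' : v 0 * v 1 = v (0,1) * v (1,0) := hdet
  by_cases h00 : v (0,0) = 0
  · by_cases h10 : v (1,0) = 0
    · have h00' : v 0 = 0 := h00
      refine ⟨![v (0,1), v (1,1)], ![0, 1], ?_⟩
      funext p
      obtain ⟨i, j⟩ := p
      fin_cases i <;> fin_cases j <;> simp [vecKron, h00, h10, h00']
    · have h01 : v (0,1) = 0 := by
        have := hdet
        rw [h00] at this
        field_simp at this
        exact (mul_eq_zero.mp (show v (0,1) * v (1,0) = 0 by rw [← this]; ring)).resolve_right h10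
      have h00' : v 0 = 0 := h00
      refine ⟨![0, v (1,0)], ![1, v 1 / v (1,0)], ?_⟩
      funext p
      obtain ⟨i, j⟩ := p
      fin_cases i <;> fin_cases j <;>
        simp [vecKron, h00, h01, h00'] <;> field_simp <;> rfl
  · have h00' : v 0 ≠ 0 := h00
    refine ⟨![v 0, v (1,0)], ![1, v (0,1) / v 0], ?_⟩
    funext p
    obtain ⟨i, j⟩ := p
    fin_cases i <;> fin_cases j <;> simp [vecKron] <;> (try rfl) <;> field_simp
    linear_combination -hdet'

lemma normalize_kron (a b : Fin 2 → ℂ)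
    (h1 : ∑ i, Complex.normSq (vecKron a b i) = 1) :
    ∃ a' b' : Fin 2 → ℂ, IsUnitVec a' ∧ IsUnitVec b' ∧ vecKron a' b' = vecKron a b := by
  have hk := kron_normSq a b
  rw [h1] at hk
  set s := ∑ i, Complex.normSq (a i) with hs_def
  set t := ∑ i, Complex.normSq (b i) with ht_def
  have hs_nonneg : 0 ≤ s := Finset.sum_nonneg fun i _ => Complex.normSq_nonneg _
  have hs_pos : 0 < s := by
    rcases hs_nonneg.lt_or_eq with h | h
    · exact h
    · exfalso; rw [← h] at hk; simp at hk
  set r := Real.sqrt s with hr_def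
  have hr2 : r ^ 2 = s := Real.sq_sqrt hs_pos.le
  have hr_pos : 0 < r := Real.sqrt_pos.mpr hs_pos
  have hr0 : (r : ℂ) ≠ 0 := by exact_mod_cast hr_pos.ne'
  refine ⟨fun i => (r : ℂ)⁻¹ * a i, fun i => (r : ℂ) * b i, ?_, ?_, ?_⟩
  · unfold IsUnitVec
    simp only [Complex.normSq_mul, Complex.normSq_inv, Complex.normSq_ofReal,
      ← Finset.mul_sum]
    rw [← hs_def]
    field_simp
    nlinarith [hr2]
  · unfold IsUnitVec
    simp only [Complex.normSq_mul, Complex.normSq_ofReal, ← Finset.mul_sum]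
    rw [← ht_def]
    nlinarith [hr2, hk]
  · funext p
    simp only [vecKron]
    field_simp

lemma unitary_preserves_normSq (U : Matrix (Fin 2 × Fin 2) (Fin 2 × Fin 2) ℂ)
    (hU : U ∈ Matrix.unitaryGroup (Fin 2 × Fin 2) ℂ) (x : Fin 2 × Fin 2 → ℂ) :
    ∑ i, Complex.normSq (U.mulVec x i) = ∑ i, Complex.normSq (x i) := by
  have cast_eq : ∀ (w : Fin 2 × Fin 2 → ℂ),
      ((∑ i, Complex.normSq (w i) : ℝ) : ℂ) = star w ⬝ᵥ w := by
    intro w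
    rw [dotProduct]
    push_cast
    refine Finset.sum_congr rfl fun i _ => ?_
    simp [Complex.normSq_eq_conj_mul_self]
  have hU1 : star U * U = 1 := hU.1
  have key : star (U.mulVec x) ⬝ᵥ U.mulVec x = star x ⬝ᵥ x := by
    rw [Matrix.star_mulVec]
    rw [← Matrix.dotProduct_mulVec]
    rw [Matrix.mulVec_mulVec]
    rw [show Uᴴ * U = 1 from hU1, Matrix.one_mulVec]
  have := (cast_eq (U.mulVec x)).trans (key.trans (cast_eq x).symm)
  exact_mod_cast this

/-- Every two-qubit unitary preserves some pure product state: for every unitary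
`U` on `ℂ²⊗ℂ²` and every unit vector `|β⟩`, there exist unit vectors `|α⟩`,
`|α'⟩`, `|β'⟩` with `U(|α⟩⊗|β⟩) = |α'⟩⊗|β'⟩`. -/
theorem two_qubit_unitary_preserves_some_product
    (U : Matrix (Fin 2 × Fin 2) (Fin 2 × Fin 2) ℂ)
    (hU : U ∈ Matrix.unitaryGroup (Fin 2 × Fin 2) ℂ)
    (β : Fin 2 → ℂ) (hβ : IsUnitVec β) :
    ∃ α α' β' : Fin 2 → ℂ, IsUnitVec α ∧ IsUnitVec α' ∧ IsUnitVec β' ∧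
      U.mulVec (vecKron α β) = vecKron α' β' := by
  set L : Fin 2 → Fin 2 → ℂ := fun i j => U (i,j) (0,0) * β 0 + U (i,j) (0,1) * β 1 with hL
  set M : Fin 2 → Fin 2 → ℂ := fun i j => U (i,j) (1,0) * β 0 + U (i,j) (1,1) * β 1 with hM
  obtain ⟨p, q, hpq, hroot⟩ := quad_root
    (L 0 0 * L 1 1 - L 0 1 * L 1 0)
    (L 0 0 * M 1 1 + M 0 0 * L 1 1 - L 0 1 * M 1 0 - M 0 1 * L 1 0)
    (M 0 0 * M 1 1 - M 0 1 * M 1 0)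
  set s0 := Complex.normSq p + Complex.normSq q with hs0_def
  have hs0_pos : 0 < s0 := by
    rcases not_and_or.mp hpq with h | h
    · have := Complex.normSq_pos.mpr h
      have := Complex.normSq_nonneg q
      linarith
    · have := Complex.normSq_pos.mpr h
      have := Complex.normSq_nonneg p
      linarith
  set r := Real.sqrt s0 with hr_def
  have hr2 : r ^ 2 = s0 := Real.sq_sqrt hs0_pos.le
  have hr_pos : 0 < r := Real.sqrt_pos.mpr hs0_pos
  set cc : ℂ := ((r : ℂ))⁻¹ with hcc
  set α : Fin 2 → ℂ := ![cc * p, cc * q] with hα_def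
  have hαunit : IsUnitVec α := by
    unfold IsUnitVec
    rw [Fin.sum_univ_two]
    simp only [hα_def, Matrix.cons_val_zero, Matrix.cons_val_one, Matrix.head_cons,
      Complex.normSq_mul, hcc, Complex.normSq_inv, Complex.normSq_ofReal]
    have hrr : r * r ≠ 0 := by positivity
    field_simp
    nlinarith [hr2]
  set v := U.mulVec (vecKron α β) with hv_def
  have hvexp : ∀ i j : Fin 2, v (i, j) = (cc * p) * L i j + (cc * q) * M i j := by
    intro i j
    simp only [hv_def, Matrix.mulVec, dotProduct, Fintype.sum_prod_type,
      Fin.sum_univ_two, vecKron, hα_def, Matrix.cons_val_zero, Matrix.cons_val_one,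
      Matrix.head_cons, hL, hM]
    ring
  have hdet : v (0,0) * v (1,1) = v (0,1) * v (1,0) := by
    rw [hvexp 0 0, hvexp 1 1, hvexp 0 1, hvexp 1 0]
    linear_combination (cc ^ 2) * hroot
  have hxunit : ∑ i, Complex.normSq (vecKron α β i) = 1 := by
    rw [kron_normSq, hαunit, hβ, one_mul]
  have hvunit : ∑ i, Complex.normSq (v i) = 1 := by
    rw [hv_def, unitary_preserves_normSq U hU, hxunit]
  obtain ⟨a, b, hab⟩ := prod_decomp v hdet
  obtain ⟨a', b', ha', hb', hab'⟩ := normalize_kron a b (by rw [hab]; exact hvunit)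
  exact ⟨α, a', b', hαunit, ha', hb', by rw [← hv_def, ← hab, hab']⟩
end

section
/- (Local energy conservation for generalized thermal unitaries, nondegenerate qubit case) Let H_A = ω_A(|α₊⟩⟨α₊| − |α₋⟩⟨α₋|) and H_B = ω_B(|β₊⟩⟨β₊| − |β₋⟩⟨β₋|) with ω_A, ω_B > 0 and orthonormal {|α_±⟩}, {|β_±⟩}. If U(H_A⊗𝟙 + 𝟙⊗H_B)U† = H_A'⊗𝟙 + 𝟙⊗H_B' with H_A', H_B' Hermitian, then the pure product states obtained from the extreme-temperature limits are preserved: U(|α₊⟩⊗|β₊⟩) and U(|α₋⟩⊗|β₋⟩) are both product vectors. -/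
open Matrix Kronecker

/-- The rank-one projector `|v⟩⟨v|` on `ℂ²`. -/
def projVec (v : Fin 2 → ℂ) : Matrix (Fin 2) (Fin 2) ℂ :=
  Matrix.of fun i j => v i * (starRingEnd ℂ) (v j)

/-- A bipartite vector is a product vector. -/
def IsProductVec (c : Fin 2 × Fin 2 → ℂ) : Prop :=
  ∃ a b : Fin 2 → ℂ, ∀ p, c p = a p.1 * b p.2

/-- A `2×2` array with vanishing determinant is an outer product. -/
lemma isProductVec_of_det (c : Fin 2 × Fin 2 → ℂ)
    (h : c (0,0) * c (1,1) = c (0,1) * c (1,0)) : IsProductVec c := by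
  by_cases h00 : c (0,0) = 0
  · by_cases h01 : c (0,1) = 0
    · refine ⟨![0,1], ![c (1,0), c (1,1)], ?_⟩
      rintro ⟨i, j⟩
      revert i; rw [Fin.forall_fin_two]
      constructor <;> (revert j; rw [Fin.forall_fin_two]) <;> constructor <;>
        simp only [Matrix.cons_val_zero, Matrix.cons_val_one, Matrix.head_cons,
          h00, h01, zero_mul, one_mul]
    · have h10 : c (1,0) = 0 := by
        have h2 := h; rw [h00, zero_mul] at h2
        rcases mul_eq_zero.mp h2.symm with h' | h'
        · exact absurd h' h01
        · exact h'
      refine ⟨![c (0,1), c (1,1)], ![0,1], ?_⟩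
      rintro ⟨i, j⟩
      revert i; rw [Fin.forall_fin_two]
      constructor <;> (revert j; rw [Fin.forall_fin_two]) <;> constructor <;>
        simp only [Matrix.cons_val_zero, Matrix.cons_val_one, Matrix.head_cons,
          h00, h10, mul_zero, mul_one]
  · refine ⟨![c (0,0), c (1,0)], ![1, c (0,1) / c (0,0)], ?_⟩
    rintro ⟨i, j⟩
    revert i; rw [Fin.forall_fin_two]
    constructor <;> (revert j; rw [Fin.forall_fin_two]) <;> constructor <;>
      simp only [Matrix.cons_val_zero, Matrix.cons_val_one, Matrix.head_cons]
    · exact (mul_one _).symm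
    · rw [mul_comm, div_mul_cancel₀ _ h00]
    · exact (mul_one _).symm
    · rw [← mul_div_assoc, eq_div_iff h00]; linear_combination h

lemma kron_mulVec (P Q : Matrix (Fin 2) (Fin 2) ℂ) (x y : Fin 2 → ℂ) :
    (P ⊗ₖ Q) *ᵥ vecKron x y = vecKron (P *ᵥ x) (Q *ᵥ y) := by
  funext p
  simp only [mulVec, dotProduct, vecKron, kroneckerMap_apply, Fintype.sum_prod_type]
  rw [Finset.sum_mul_sum]
  exact Finset.sum_congr rfl fun i _ => Finset.sum_congr rfl fun j _ => by ring

lemma kron_conjTranspose_s19 (P Q : Matrix (Fin 2) (Fin 2) ℂ) :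
    (P ⊗ₖ Q)ᴴ = Pᴴ ⊗ₖ Qᴴ := by
  ext p q; simp [conjTranspose_apply, mul_comm]

/-- Key lemma: an eigenvector of `A⊗1 + 1⊗B` (A, B Hermitian) with nonzero eigenvalue,
when the total trace vanishes, is a product vector. -/
lemma eigen_product (A B : Matrix (Fin 2) (Fin 2) ℂ) (hA : A.IsHermitian) (hB : B.IsHermitian)
    (htr : (A ⊗ₖ (1 : Matrix (Fin 2) (Fin 2) ℂ) + (1 : Matrix (Fin 2) (Fin 2) ℂ) ⊗ₖ B).trace = 0)
    (lam : ℂ) (hlam : lam ≠ 0) (w : Fin 2 × Fin 2 → ℂ)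
    (hw : (A ⊗ₖ (1 : Matrix (Fin 2) (Fin 2) ℂ) + (1 : Matrix (Fin 2) (Fin 2) ℂ) ⊗ₖ B) *ᵥ w
      = lam • w) : IsProductVec w := by
  set M := A ⊗ₖ (1 : Matrix (Fin 2) (Fin 2) ℂ) + (1 : Matrix (Fin 2) (Fin 2) ℂ) ⊗ₖ B with hM
  set VA := (hA.eigenvectorUnitary : Matrix (Fin 2) (Fin 2) ℂ)
  set VB := (hB.eigenvectorUnitary : Matrix (Fin 2) (Fin 2) ℂ)
  set a : Fin 2 → ℝ := hA.eigenvalues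
  set b : Fin 2 → ℝ := hB.eigenvalues
  set V := VA ⊗ₖ VB with hV
  have hVAu : VA * VAᴴ = 1 := Matrix.mem_unitaryGroup_iff.mp hA.eigenvectorUnitary.2
  have hVAu' : VAᴴ * VA = 1 := Matrix.mem_unitaryGroup_iff'.mp hA.eigenvectorUnitary.2
  have hVBu : VB * VBᴴ = 1 := Matrix.mem_unitaryGroup_iff.mp hB.eigenvectorUnitary.2
  have hVBu' : VBᴴ * VB = 1 := Matrix.mem_unitaryGroup_iff'.mp hB.eigenvectorUnitary.2
  have hVu : V * Vᴴ = 1 := by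
    rw [hV, kron_conjTranspose_s19, ← mul_kronecker_mul, hVAu, hVBu, one_kronecker_one]
  have hVu' : Vᴴ * V = 1 := by
    rw [hV, kron_conjTranspose_s19, ← mul_kronecker_mul, hVAu', hVBu', one_kronecker_one]
  set d : Fin 2 × Fin 2 → ℂ := fun p => (a p.1 : ℂ) + (b p.2 : ℂ) with hd
  have hMD : M = V * diagonal d * Vᴴ := by
    set DA : Matrix (Fin 2) (Fin 2) ℂ := diagonal (fun i => (a i : ℂ)) with hDA
    set DB : Matrix (Fin 2) (Fin 2) ℂ := diagonal (fun i => (b i : ℂ)) with hDB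
    have key : ∀ (XA XB : Matrix (Fin 2) (Fin 2) ℂ),
        (VA * XA * VAᴴ) ⊗ₖ (VB * XB * VBᴴ) = V * (XA ⊗ₖ XB) * Vᴴ := by
      intro XA XB
      rw [hV, kron_conjTranspose_s19, ← mul_kronecker_mul, ← mul_kronecker_mul]
    have hAe : A = VA * DA * VAᴴ := hA.spectral_theorem
    have hBe : B = VB * DB * VBᴴ := hB.spectral_theorem
    have e1 : A ⊗ₖ (1 : Matrix (Fin 2) (Fin 2) ℂ) = V * (DA ⊗ₖ 1) * Vᴴ := by
      calc A ⊗ₖ (1 : Matrix (Fin 2) (Fin 2) ℂ)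
          = (VA * DA * VAᴴ) ⊗ₖ (VB * 1 * VBᴴ) := by rw [← hAe, mul_one, hVBu]
        _ = V * (DA ⊗ₖ 1) * Vᴴ := key DA 1
    have e2 : (1 : Matrix (Fin 2) (Fin 2) ℂ) ⊗ₖ B = V * ((1 : Matrix (Fin 2) (Fin 2) ℂ) ⊗ₖ DB) * Vᴴ := by
      calc (1 : Matrix (Fin 2) (Fin 2) ℂ) ⊗ₖ B
          = (VA * 1 * VAᴴ) ⊗ₖ (VB * DB * VBᴴ) := by rw [← hBe, mul_one, hVAu]
        _ = V * (1 ⊗ₖ DB) * Vᴴ := key 1 DB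
    have ediag : DA ⊗ₖ (1 : Matrix (Fin 2) (Fin 2) ℂ) + (1 : Matrix (Fin 2) (Fin 2) ℂ) ⊗ₖ DB
        = diagonal d := by
      rw [hDA, hDB, show (1 : Matrix (Fin 2) (Fin 2) ℂ) = diagonal (fun _ => (1:ℂ)) from
        (diagonal_one).symm, diagonal_kronecker_diagonal, diagonal_kronecker_diagonal,
        diagonal_add]
      congr 1; funext p; simp [hd]
    rw [hM, e1, e2, ← add_mul, ← mul_add, ediag]
  -- the coefficient vector
  set c : Fin 2 × Fin 2 → ℂ := Vᴴ *ᵥ w with hc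
  have hwc : w = V *ᵥ c := by rw [hc, mulVec_mulVec, hVu, one_mulVec]
  have hdc : ∀ p, d p * c p = lam * c p := by
    have h1 : (V * diagonal d * Vᴴ) *ᵥ w = lam • w := by rw [← hMD]; exact hw
    have h2 : Vᴴ *ᵥ ((V * diagonal d * Vᴴ) *ᵥ w) = Vᴴ *ᵥ (lam • w) := congrArg _ h1
    rw [mulVec_mulVec, ← mul_assoc, ← mul_assoc, hVu', one_mul, mulVec_smul,
      ← mulVec_mulVec] at h2
    have hDc : diagonal d *ᵥ c = lam • c := by rw [hc]; exact h2
    intro p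
    have h3 := congrFun hDc p
    simpa [mulVec_diagonal] using h3
  -- trace: sum of d is 0
  have hsum : d (0,0) + d (1,1) = d (0,1) + d (1,0) := by
    simp only [hd]; push_cast; ring
  have htrd : (∑ p : Fin 2 × Fin 2, d p) = 0 := by
    have : (diagonal d).trace = M.trace := by
      rw [hMD, trace_mul_cycle, hVu', one_mul]
    rw [← htr, ← this]
    simp [Matrix.trace, Matrix.diag]
  -- determinant of c vanishes
  have hdet : c (0,0) * c (1,1) = c (0,1) * c (1,0) := by
    by_contra hne
    have eig : ∀ p, c p ≠ 0 → d p = lam := fun p hp => mul_right_cancel₀ hp (hdc p)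
    have h2l : d (0,0) + d (1,1) = 2 * lam := by
      by_cases h : c (0,0) * c (1,1) = 0
      · have h' : c (0,1) * c (1,0) ≠ 0 := fun hz => hne (h.trans hz.symm)
        have h01 := eig (0,1) (left_ne_zero_of_mul h')
        have h10 := eig (1,0) (right_ne_zero_of_mul h')
        rw [hsum, h01, h10]; ring
      · rw [eig (0,0) (left_ne_zero_of_mul h), eig (1,1) (right_ne_zero_of_mul h)]; ring
    have hs : ∑ p : Fin 2 × Fin 2, d p = d (0,0) + d (0,1) + (d (1,0) + d (1,1)) := by
      rw [Fintype.sum_prod_type]; simp [Fin.sum_univ_two]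
    rw [hs] at htrd
    have h4 : (4:ℂ) * lam = 0 := by linear_combination htrd - 2 * h2l + hsum
    apply hlam
    have := mul_eq_zero.mp h4
    simpa using this
  obtain ⟨x, y, hxy⟩ := isProductVec_of_det c hdet
  have : c = vecKron x y := funext fun p => hxy p
  rw [hwc, this, hV, kron_mulVec]
  exact ⟨_, _, fun p => rfl⟩

lemma trace_projVec (v : Fin 2 → ℂ) (hv : ∑ i, Complex.normSq (v i) = 1) :
    (projVec v).trace = 1 := by
  simp only [Matrix.trace, Matrix.diag, projVec, Matrix.of_apply, Complex.mul_conj]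
  rw [← Complex.ofReal_sum, hv, Complex.ofReal_one]

lemma projVec_mulVec_self (v : Fin 2 → ℂ) (hv : ∑ i, Complex.normSq (v i) = 1) :
    projVec v *ᵥ v = v := by
  have hone : ∑ j, (starRingEnd ℂ) (v j) * v j = 1 := by
    rw [Finset.sum_congr rfl (fun j _ => by rw [mul_comm, Complex.mul_conj]),
      ← Complex.ofReal_sum, hv, Complex.ofReal_one]
  funext i
  simp only [mulVec, dotProduct, projVec, Matrix.of_apply]
  calc ∑ j, v i * (starRingEnd ℂ) (v j) * v j
      = v i * ∑ j, (starRingEnd ℂ) (v j) * v j := by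
        rw [Finset.mul_sum]; exact Finset.sum_congr rfl fun j _ => by ring
    _ = v i := by rw [hone, mul_one]

lemma projVec_mulVec_orth (u v : Fin 2 → ℂ) (horth : ∑ j, (starRingEnd ℂ) (u j) * v j = 0) :
    projVec u *ᵥ v = 0 := by
  funext i
  simp only [mulVec, dotProduct, projVec, Matrix.of_apply, Pi.zero_apply]
  calc ∑ j, u i * (starRingEnd ℂ) (u j) * v j
      = u i * ∑ j, (starRingEnd ℂ) (u j) * v j := by
        rw [Finset.mul_sum]; exact Finset.sum_congr rfl fun j _ => by ring
    _ = 0 := by rw [horth, mul_zero]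

lemma vecKron_smul_left (s : ℂ) (a b : Fin 2 → ℂ) :
    vecKron (s • a) b = s • vecKron a b := by
  funext p; simp [vecKron, mul_assoc]

/-- Local energy conservation for generalized thermal two-qubit unitaries
(nondegenerate case): with `H_A = ω_A(|α₊⟩⟨α₊| − |α₋⟩⟨α₋|)`,
`H_B = ω_B(|β₊⟩⟨β₊| − |β₋⟩⟨β₋|)`, `ω_A, ω_B > 0` and orthonormal `{|α_±⟩}`,
`{|β_±⟩}`, if `U(H_A⊗𝟙 + 𝟙⊗H_B)U† = H_A'⊗𝟙 + 𝟙⊗H_B'` with `H_A', H_B'`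
Hermitian, then `U(|α₊⟩⊗|β₊⟩)` and `U(|α₋⟩⊗|β₋⟩)` are product vectors. -/
theorem generalizedThermal_preserves_extreme_products
    (U : Matrix (Fin 2 × Fin 2) (Fin 2 × Fin 2) ℂ)
    (hU : U ∈ Matrix.unitaryGroup (Fin 2 × Fin 2) ℂ)
    (αp αm βp βm : Fin 2 → ℂ)
    (hαp : ∑ i, Complex.normSq (αp i) = 1) (hαm : ∑ i, Complex.normSq (αm i) = 1)
    (hβp : ∑ i, Complex.normSq (βp i) = 1) (hβm : ∑ i, Complex.normSq (βm i) = 1)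
    (hαorth : ∑ i, (starRingEnd ℂ) (αp i) * αm i = 0)
    (hβorth : ∑ i, (starRingEnd ℂ) (βp i) * βm i = 0)
    (ωA ωB : ℝ) (hωA : 0 < ωA) (hωB : 0 < ωB)
    (HA' HB' : Matrix (Fin 2) (Fin 2) ℂ)
    (hHA' : HA'.IsHermitian) (hHB' : HB'.IsHermitian)
    (hGT : U * (((ωA : ℂ) • (projVec αp - projVec αm)) ⊗ₖ (1 : Matrix (Fin 2) (Fin 2) ℂ)
        + (1 : Matrix (Fin 2) (Fin 2) ℂ) ⊗ₖ ((ωB : ℂ) • (projVec βp - projVec βm))) * Uᴴ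
      = HA' ⊗ₖ (1 : Matrix (Fin 2) (Fin 2) ℂ) + (1 : Matrix (Fin 2) (Fin 2) ℂ) ⊗ₖ HB') :
    IsProductVec (U.mulVec (vecKron αp βp)) ∧ IsProductVec (U.mulVec (vecKron αm βm)) := by
  have hUu : U * Uᴴ = 1 := Matrix.mem_unitaryGroup_iff.mp hU
  have hUu' : Uᴴ * U = 1 := Matrix.mem_unitaryGroup_iff'.mp hU
  set HA : Matrix (Fin 2) (Fin 2) ℂ := (ωA : ℂ) • (projVec αp - projVec αm) with hHA
  set HB : Matrix (Fin 2) (Fin 2) ℂ := (ωB : ℂ) • (projVec βp - projVec βm) with hHB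
  set H : Matrix (Fin 2 × Fin 2) (Fin 2 × Fin 2) ℂ :=
    HA ⊗ₖ (1 : Matrix (Fin 2) (Fin 2) ℂ) + (1 : Matrix (Fin 2) (Fin 2) ℂ) ⊗ₖ HB with hHdef
  set M : Matrix (Fin 2 × Fin 2) (Fin 2 × Fin 2) ℂ :=
    HA' ⊗ₖ (1 : Matrix (Fin 2) (Fin 2) ℂ) + (1 : Matrix (Fin 2) (Fin 2) ℂ) ⊗ₖ HB' with hMdef
  -- trace of M is zero
  have htrHA : HA.trace = 0 := by
    rw [hHA, trace_smul, trace_sub, trace_projVec αp hαp, trace_projVec αm hαm]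
    simp
  have htrHB : HB.trace = 0 := by
    rw [hHB, trace_smul, trace_sub, trace_projVec βp hβp, trace_projVec βm hβm]
    simp
  have htrH : H.trace = 0 := by
    rw [hHdef, trace_add, trace_kronecker, trace_kronecker, htrHA, htrHB]
    simp
  have htrM : M.trace = 0 := by
    have : M = U * H * Uᴴ := hGT.symm
    rw [this, trace_mul_cycle, hUu', one_mul, htrH]
  -- eigenvector equations for H
  have hHAp : HA *ᵥ αp = (ωA : ℂ) • αp := by
    rw [hHA, smul_mulVec, sub_mulVec, projVec_mulVec_self αp hαp,
      projVec_mulVec_orth αm αp ?_, sub_zero]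
    have := congrArg (starRingEnd ℂ) hαorth
    simpa [map_sum, mul_comm] using this
  have hHAm : HA *ᵥ αm = (-(ωA : ℂ)) • αm := by
    rw [hHA, smul_mulVec, sub_mulVec, projVec_mulVec_self αm hαm,
      projVec_mulVec_orth αp αm hαorth, zero_sub, smul_neg, neg_smul]
  have hHBp : HB *ᵥ βp = (ωB : ℂ) • βp := by
    rw [hHB, smul_mulVec, sub_mulVec, projVec_mulVec_self βp hβp,
      projVec_mulVec_orth βm βp ?_, sub_zero]
    have := congrArg (starRingEnd ℂ) hβorth
    simpa [map_sum, mul_comm] using this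
  have hHBm : HB *ᵥ βm = (-(ωB : ℂ)) • βm := by
    rw [hHB, smul_mulVec, sub_mulVec, projVec_mulVec_self βm hβm,
      projVec_mulVec_orth βp βm hβorth, zero_sub, smul_neg, neg_smul]
  have eigH : ∀ (x y : Fin 2 → ℂ) (s t : ℂ), HA *ᵥ x = s • x → HB *ᵥ y = t • y →
      H *ᵥ vecKron x y = (s + t) • vecKron x y := by
    intro x y s t hx hy
    rw [hHdef, add_mulVec, kron_mulVec, kron_mulVec, one_mulVec, one_mulVec, hx, hy,
      vecKron_smul_left, add_smul]
    congr 1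
    funext p; simp [vecKron]; ring
  -- transfer to M
  have eigM : ∀ (v : Fin 2 × Fin 2 → ℂ) (s : ℂ), H *ᵥ v = s • v →
      M *ᵥ (U *ᵥ v) = s • (U *ᵥ v) := by
    intro v s hv
    have : M = U * H * Uᴴ := hGT.symm
    rw [this, mulVec_mulVec, mul_assoc, mul_assoc, hUu', mul_one, ← mulVec_mulVec, hv,
      mulVec_smul]
  constructor
  · have h1 : H *ᵥ vecKron αp βp = ((ωA : ℂ) + (ωB : ℂ)) • vecKron αp βp :=
      eigH αp βp _ _ hHAp hHBp
    refine eigen_product HA' HB' hHA' hHB' htrM ((ωA : ℂ) + (ωB : ℂ)) ?_ _ (eigM _ _ h1)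
    rw [← Complex.ofReal_add]
    exact Complex.ofReal_ne_zero.mpr (by positivity)
  · have h1 : H *ᵥ vecKron αm βm = ((-(ωA : ℂ)) + (-(ωB : ℂ))) • vecKron αm βm :=
      eigH αm βm _ _ hHAm hHBm
    refine eigen_product HA' HB' hHA' hHB' htrM _ ?_ _ (eigM _ _ h1)
    rw [← Complex.ofReal_neg, ← Complex.ofReal_neg, ← Complex.ofReal_add]
    refine Complex.ofReal_ne_zero.mpr (by nlinarith)
end
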